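/- Let m ≥ 1 and n ≥ 4 be integers. The number of spanning trees of the join K_m ∨ P_n equals ((m+n)^{m−1} / (2^n · √(m²+4m))) · ((m+2+√(m²+4m))^n − (m+2−√(m²+4m))^n), where the right-hand side is a real-number expression whose value is this natural number. Equivalently, the determinant of the matrix obtained from the Laplacian L(K_m ∨ P_n) by deleting one row and the corresponding column equals this quantity. -/

import Mathlib

open Matrix SimpleGraph

/-- The join of two simple graphs on disjoint vertex sets. -/
def graphJoin {α β : Type*} (G : SimpleGraph α) (H : SimpleGraph β) :
    SimpleGraph (α ⊕ β) where
  Adj x y :=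
    match x, y with
    | Sum.inl a, Sum.inl b => G.Adj a b
    | Sum.inr a, Sum.inr b => H.Adj a b
    | _, _ => True
  symm := by
    constructor
    rintro (a | a) (b | b) h
    · exact SimpleGraph.Adj.symm h
    · trivial
    · trivial
    · exact SimpleGraph.Adj.symm h
  loopless := by
    constructor
    rintro (a | a) h
    · exact G.irrefl h
    · exact H.irrefl h

instance graphJoin.adjDecidable {α β : Type*} (G : SimpleGraph α) (H : SimpleGraph β)
    [DecidableRel G.Adj] [DecidableRel H.Adj] :
    DecidableRel (graphJoin G H).Adj := fun x y =>
  match x, y with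
  | Sum.inl a, Sum.inl b => (inferInstance : Decidable (G.Adj a b))
  | Sum.inr a, Sum.inr b => (inferInstance : Decidable (H.Adj a b))
  | Sum.inl _, Sum.inr _ => Decidable.isTrue trivial
  | Sum.inr _, Sum.inl _ => Decidable.isTrue trivial

instance pathGraph.adjDecidable (n : ℕ) : DecidableRel (pathGraph n).Adj := fun _ _ =>
  decidable_of_iff _ pathGraph_adj.symm

section Aux

/-- Chebyshev-like sequence. -/
def Useq (x : ℝ) : ℕ → ℝ
  | 0 => 0
  | 1 => 1
  | (k+2) => x * Useq x (k+1) - Useq x k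

lemma Useq_closed (m : ℝ) (hm : 1 ≤ m) (k : ℕ) :
    (2:ℝ)^k * Real.sqrt (m^2 + 4*m) * Useq (m+2) k =
      (m + 2 + Real.sqrt (m^2+4*m))^k - (m + 2 - Real.sqrt (m^2+4*m))^k := by
  set s := Real.sqrt (m^2+4*m) with hs
  have hD : (0:ℝ) ≤ m^2 + 4*m := by nlinarith
  have hs2 : s^2 = m^2 + 4*m := Real.sq_sqrt hD
  induction k using Nat.twoStepInduction with
  | zero => simp [Useq]
  | one => simp [Useq]; ring
  | more k ih1 ih2 =>
    have h : Useq (m+2) (k+2) = (m+2) * Useq (m+2) (k+1) - Useq (m+2) k := rfl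
    rw [h]
    linear_combination 2*(m+2)*ih2 - 4*ih1 + ((m+2-s)^k - (m+2+s)^k) * hs2

def pseq (c : ℕ → ℝ) : ℕ → ℝ
  | 0 => 1
  | 1 => c 0
  | (k+2) => c (k+1) * pseq c (k+1) - pseq c k

def triMat (c : ℕ → ℝ) (k : ℕ) : Matrix (Fin k) (Fin k) ℝ :=
  Matrix.of fun i j => if (i:ℕ) = (j:ℕ) then c i else if (i:ℕ)+1 = (j:ℕ) ∨ (j:ℕ)+1 = (i:ℕ) then (-1) else 0

lemma triMat_apply (c : ℕ → ℝ) (k : ℕ) (i j : Fin k) :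
    triMat c k i j = if (i:ℕ) = (j:ℕ) then c i else if (i:ℕ)+1 = (j:ℕ) ∨ (j:ℕ)+1 = (i:ℕ) then (-1) else 0 := rfl

lemma triMat_submatrix' (c : ℕ → ℝ) (k : ℕ) :
    (triMat c (k+1)).submatrix Fin.castSucc Fin.castSucc = triMat c k := by
  ext i j
  simp [triMat_apply, submatrix_apply]

lemma triMat_det_rec (c : ℕ → ℝ) (k : ℕ) :
    (triMat c (k+2)).det = c (k+1) * (triMat c (k+1)).det - (triMat c k).det := by
  set A := triMat c (k+2) with hA
  rw [det_succ_row A (Fin.last (k+1))]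
  rw [Fin.sum_univ_castSucc]
  rw [Fin.sum_univ_castSucc]
  have hzero : ∀ j : Fin k, (-1:ℝ) ^ ((Fin.last (k+1) : ℕ) + ((j.castSucc.castSucc : Fin (k+2)) : ℕ))
      * A (Fin.last (k+1)) j.castSucc.castSucc *
      (A.submatrix (Fin.last (k+1)).succAbove (j.castSucc.castSucc).succAbove).det = 0 := by
    intro j
    have : A (Fin.last (k+1)) j.castSucc.castSucc = 0 := by
      have hj : (j:ℕ) < k := j.isLt
      simp only [hA, triMat_apply, Fin.val_last, Fin.coe_castSucc]
      rw [if_neg (by omega), if_neg (by omega)]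
    rw [this]; ring
  rw [Finset.sum_eq_zero (fun j _ => hzero j), zero_add]
  -- main diagonal term
  have hmain : (-1:ℝ) ^ ((Fin.last (k+1) : ℕ) + ((Fin.last (k+1) : Fin (k+2)) : ℕ)) *
      A (Fin.last (k+1)) (Fin.last (k+1)) *
      (A.submatrix (Fin.last (k+1)).succAbove (Fin.last (k+1)).succAbove).det
      = c (k+1) * (triMat c (k+1)).det := by
    have h1 : A (Fin.last (k+1)) (Fin.last (k+1)) = c (k+1) := by
      simp [hA, triMat_apply]
    have h2 : A.submatrix (Fin.last (k+1)).succAbove (Fin.last (k+1)).succAbove = triMat c (k+1) := by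
      rw [Fin.succAbove_last]
      ext i j
      simp [hA, triMat_apply, submatrix_apply]
    rw [h1, h2, Fin.val_last]
    have : (-1:ℝ) ^ ((k+1) + (k+1)) = 1 := by
      rw [← two_mul]; exact (Even.neg_one_pow ⟨k+1, by ring⟩)
    rw [this, one_mul]
  -- off-diagonal term
  have hoff : (-1:ℝ) ^ ((Fin.last (k+1) : ℕ) + (((Fin.last k).castSucc : Fin (k+2)) : ℕ)) *
      A (Fin.last (k+1)) (Fin.last k).castSucc *
      (A.submatrix (Fin.last (k+1)).succAbove ((Fin.last k).castSucc).succAbove).det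
      = - (triMat c k).det := by
    set p : Fin (k+2) := (Fin.last k).castSucc with hp
    have hpv : ((p : Fin (k+2)) : ℕ) = k := by simp [hp]
    have hsign : (-1:ℝ) ^ ((Fin.last (k+1) : ℕ) + ((p : Fin (k+2)) : ℕ)) = -1 := by
      rw [Fin.val_last, hpv]
      exact Odd.neg_one_pow ⟨k, by ring⟩
    have hentry : A (Fin.last (k+1)) p = -1 := by
      simp only [hA, triMat_apply, Fin.val_last]
      rw [if_neg (by omega), if_pos (by omega)]
    set M := A.submatrix (Fin.last (k+1)).succAbove p.succAbove with hM
    have hdetM : M.det = - (triMat c k).det := by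
      rw [det_succ_column M (Fin.last k), Fin.sum_univ_castSucc]
      have hz : ∀ i : Fin k, (-1:ℝ) ^ (((i.castSucc : Fin (k+1)) : ℕ) + ((Fin.last k : ℕ))) *
          M i.castSucc (Fin.last k) *
          (M.submatrix (i.castSucc).succAbove (Fin.last k).succAbove).det = 0 := by
        intro i
        have hcol : p.succAbove (Fin.last k) = Fin.last (k+1) := by
          rw [Fin.succAbove_of_le_castSucc _ _ (by simp [hp])]
          rfl
        have : M i.castSucc (Fin.last k) = 0 := by
          rw [hM, submatrix_apply, Fin.succAbove_last, hcol]
          simp only [hA, triMat_apply, Fin.coe_castSucc, Fin.val_last]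
          rw [if_neg (by omega), if_neg (by omega)]
        rw [this]; ring
      rw [Finset.sum_eq_zero (fun i _ => hz i), zero_add]
      have hcol : p.succAbove (Fin.last k) = Fin.last (k+1) := by
        rw [Fin.succAbove_of_le_castSucc _ _ (by simp [hp])]
        rfl
      have hent2 : M (Fin.last k) (Fin.last k) = -1 := by
        rw [hM, submatrix_apply, Fin.succAbove_last, hcol]
        have hv : ((Fin.last (k+1) : Fin (k+2)) : ℕ) = k+1 := rfl
        simp only [hA, triMat_apply, Fin.coe_castSucc, Fin.val_last, hv]
        rw [if_neg (by omega), if_pos (by left; trivial)]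
      have hmin : M.submatrix (Fin.last k).succAbove (Fin.last k).succAbove = triMat c k := by
        rw [Fin.succAbove_last]
        ext i j
        rw [submatrix_apply, hM, submatrix_apply, Fin.succAbove_last]
        have hcol2 : p.succAbove j.castSucc = (j.castSucc).castSucc := by
          apply Fin.succAbove_of_castSucc_lt
          simp only [hp, Fin.lt_def, Fin.coe_castSucc, Fin.val_last]
          exact j.isLt
        rw [hcol2]
        simp [hA, triMat_apply]
      rw [hent2, hmin]
      have : (-1:ℝ) ^ (((Fin.last k : Fin (k+1)) : ℕ) + ((Fin.last k : ℕ))) = 1 := by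
        simp only [Fin.val_last]
        rw [← two_mul]; exact (Even.neg_one_pow ⟨k, by ring⟩)
      rw [this]; ring
    rw [hsign, hentry, hdetM]; ring
  rw [hmain, hoff]; ring

lemma triMat_det (c : ℕ → ℝ) (k : ℕ) : (triMat c k).det = pseq c k := by
  induction k using Nat.twoStepInduction with
  | zero => simp [pseq, Matrix.det_fin_zero]
  | one => simp [pseq, Matrix.det_fin_one, triMat_apply]
  | more k ih1 ih2 =>
    rw [triMat_det_rec, ih1, ih2]
    rfl

lemma det_updateRow_single (k : ℕ) (M : Matrix (Fin (k+1)) (Fin (k+1)) ℝ) :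
    (M.updateRow (Fin.last k) (Pi.single (Fin.last k) 1)).det
      = (M.submatrix Fin.castSucc Fin.castSucc).det := by
  rw [det_succ_row _ (Fin.last k)]
  rw [Finset.sum_eq_single (Fin.last k)]
  · rw [updateRow_self, Pi.single_eq_same]
    have hsub : ((M.updateRow (Fin.last k) (Pi.single (Fin.last k) 1)).submatrix
        (Fin.last k).succAbove (Fin.last k).succAbove) = M.submatrix Fin.castSucc Fin.castSucc := by
      rw [Fin.succAbove_last]
      ext i j
      rw [submatrix_apply, submatrix_apply,
        updateRow_ne (Fin.ne_of_lt (Fin.castSucc_lt_last i))]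
    rw [hsub]
    have : (-1:ℝ) ^ ((Fin.last k : ℕ) + (Fin.last k : ℕ)) = 1 := by
      rw [Fin.val_last, ← two_mul]; exact (Even.neg_one_pow ⟨k, by ring⟩)
    rw [this]; ring
  · intro j _ hj
    rw [updateRow_self, Pi.single_eq_of_ne hj]
    ring
  · intro h; exact absurd (Finset.mem_univ _) h

def cseq (m : ℝ) : ℕ → ℝ := fun i => if i = 0 then m+1 else m+2

def Dmat (m : ℝ) (n : ℕ) : Matrix (Fin n) (Fin n) ℝ :=
  Matrix.of fun i j => if (i:ℕ) = (j:ℕ) then (if (i:ℕ) = 0 ∨ (i:ℕ) = n-1 then m+1 else m+2)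
    else if (i:ℕ)+1 = (j:ℕ) ∨ (j:ℕ)+1 = (i:ℕ) then (-1) else 0

lemma pseq_cseq (m : ℝ) (k : ℕ) : pseq (cseq m) k = Useq (m+2) (k+1) - Useq (m+2) k := by
  induction k using Nat.twoStepInduction with
  | zero => simp [pseq, Useq]
  | one =>
    have h1 : Useq (m+2) 2 = (m+2) * Useq (m+2) 1 - Useq (m+2) 0 := rfl
    simp [pseq, cseq, h1, Useq]
    ring
  | more k ih1 ih2 =>
    have h : pseq (cseq m) (k+2) = cseq m (k+1) * pseq (cseq m) (k+1) - pseq (cseq m) k := rfl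
    have h4 : Useq (m+2) (k+3) = (m+2) * Useq (m+2) (k+2) - Useq (m+2) (k+1) := rfl
    have hc : cseq m (k+1) = m + 2 := by simp [cseq]
    rw [h, ih1, ih2, hc]
    have h5 : Useq (m+2) (k+2) = (m+2) * Useq (m+2) (k+1) - Useq (m+2) k := rfl
    rw [show k+1+1 = k+2 from rfl, show k+2+1 = k+3 from rfl, h4, h5]
    ring

lemma det_Dmat (m : ℝ) (n : ℕ) (hn : 4 ≤ n) : (Dmat m n).det = m * Useq (m+2) n := by
  obtain ⟨n', rfl⟩ : ∃ n', n = n' + 1 := ⟨n - 1, by omega⟩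
  have hn' : 3 ≤ n' := by omega
  have hl : ((Fin.last n' : Fin (n'+1)) : ℕ) = n' := rfl
  have hupd : Dmat m (n'+1) = (triMat (cseq m) (n'+1)).updateRow (Fin.last n')
      ((triMat (cseq m) (n'+1)) (Fin.last n') + (-Pi.single (Fin.last n') 1)) := by
    ext i j
    by_cases hi : i = Fin.last n'
    · subst hi
      rw [updateRow_self]
      by_cases hj : j = Fin.last n'
      · subst hj
        simp only [Pi.add_apply, Pi.neg_apply, Pi.single_eq_same, triMat_apply,
          Dmat, Matrix.of_apply, cseq, hl, ite_true]
        rw [if_pos (Or.inr (by omega : n' = n' + 1 - 1)), if_neg (by omega)]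
        ring
      · have hjv : (j:ℕ) ≠ n' := fun h => hj (Fin.ext (by simp [h]))
        have hne : ¬ (n' = (j:ℕ)) := by omega
        simp only [Pi.add_apply, Pi.neg_apply, Pi.single_eq_of_ne hj, neg_zero, add_zero,
          triMat_apply, Dmat, Matrix.of_apply, cseq, hl]
        rw [if_neg hne, if_neg hne]
    · have hiv : (i:ℕ) ≠ n' := fun h => hi (Fin.ext (by simp [h]))
      rw [updateRow_ne hi]
      simp only [triMat_apply, Dmat, Matrix.of_apply, cseq]
      by_cases hij : (i:ℕ) = (j:ℕ)
      · rw [if_pos hij, if_pos hij]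
        by_cases h0 : (i:ℕ) = 0
        · rw [if_pos (Or.inl (by omega)), if_pos h0]
        · rw [if_neg (by omega), if_neg h0]
      · rw [if_neg hij, if_neg hij]
  rw [hupd, det_updateRow_add]
  rw [updateRow_eq_self]
  have : ((-Pi.single (Fin.last n') 1 : Fin (n'+1) → ℝ)) = (-1 : ℝ) • (Pi.single (Fin.last n') 1 : Fin (n'+1) → ℝ) := by
    ext x; simp
  rw [this, det_updateRow_smul, det_updateRow_single, triMat_submatrix']
  rw [triMat_det, triMat_det]
  have h2 := pseq_cseq m (n'+1)
  have h3 := pseq_cseq m n'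
  have h4 : Useq (m+2) (n'+2) = (m+2) * Useq (m+2) (n'+1) - Useq (m+2) n' := rfl
  rw [h2, h3, h4]
  ring

lemma det_one_add_ones (W : Type*) [Fintype W] [DecidableEq W] :
    (1 + Matrix.of (fun _ _ => (1:ℝ)) : Matrix W W ℝ).det = 1 + Fintype.card W := by
  have h : (Matrix.of (fun _ _ => (1:ℝ)) : Matrix W W ℝ)
      = (replicateCol Unit (fun _ => (1:ℝ)) : Matrix W Unit ℝ) * (replicateRow Unit (fun _ => (1:ℝ)) : Matrix Unit W ℝ) := by
    ext i j
    simp [mul_apply]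
  rw [h, det_one_add_replicateCol_mul_replicateRow]
  simp [dotProduct]

lemma det_blocks_add_ones {W : Type*} [Fintype W] [DecidableEq W]
    (a : Matrix Unit Unit ℝ) (b : Matrix Unit W ℝ) (c : Matrix W Unit ℝ) (d : Matrix W W ℝ)
    (hc1 : a () () + ∑ k, c k () = 0)
    (hc2 : ∀ j, b () j + ∑ k, d k j = 0)
    (hr2 : ∀ k, c k () + ∑ j, d k j = 0) :
    (fromBlocks a b c d + fromBlocks (Matrix.of fun _ _ => 1) (Matrix.of fun _ _ => 1)
      (Matrix.of fun _ _ => 1) (Matrix.of fun _ _ => 1)).det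
      = (1 + (Fintype.card W : ℝ))^2 * d.det := by
  set N : ℝ := 1 + (Fintype.card W : ℝ) with hN
  set E : Matrix (Unit ⊕ W) (Unit ⊕ W) ℝ :=
    fromBlocks 1 (Matrix.of fun _ _ => (1:ℝ)) 0 1 with hE
  set F : Matrix (Unit ⊕ W) (Unit ⊕ W) ℝ :=
    fromBlocks 1 (Matrix.of fun _ _ => (-1:ℝ)) 0 1 with hF
  set M : Matrix (Unit ⊕ W) (Unit ⊕ W) ℝ :=
    fromBlocks a b c d + fromBlocks (Matrix.of fun _ _ => 1) (Matrix.of fun _ _ => 1)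
      (Matrix.of fun _ _ => 1) (Matrix.of fun _ _ => 1) with hM
  have hdetE : E.det = 1 := by rw [hE, det_fromBlocks_zero₂₁]; simp
  have hdetF : F.det = 1 := by rw [hF, det_fromBlocks_zero₂₁]; simp
  have key : E * M * F = fromBlocks (N • 1) 0
      (c + Matrix.of fun _ _ => 1) (d * (1 + Matrix.of fun _ _ => 1)) := by
    rw [hE, hF, hM, fromBlocks_add, fromBlocks_multiply, fromBlocks_multiply]
    ext (i | i) (j | j)
    · simp [mul_apply, Finset.sum_add_distrib, Finset.card_univ, hN]
      linarith [hc1]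
    · simp [mul_apply, Finset.sum_add_distrib, Finset.card_univ, hN]
      linarith [hc1, hc2 j]
    · simp [mul_apply]
    · simp [mul_apply, Matrix.one_apply, mul_add, mul_ite, mul_one, mul_zero,
        Finset.sum_add_distrib, Finset.sum_ite_eq', Finset.card_univ]
      linarith [hr2 i]
  have hh : E.det * M.det * F.det = (fromBlocks (N • 1) 0
      (c + Matrix.of fun _ _ => 1) (d * (1 + Matrix.of fun _ _ => 1))).det := by
    rw [← det_mul, ← det_mul, key]
  rw [hdetE, hdetF, one_mul, mul_one] at hh
  rw [hh, det_fromBlocks_zero₁₂, det_mul, det_one_add_ones]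
  have h11 : (N • (1 : Matrix Unit Unit ℝ)).det = N := by
    simp [det_unique]
  rw [h11, hN]
  ring

end Aux

section Graph

variable (m n : ℕ)

/-- abbreviation for the real Laplacian of the join. -/
noncomputable def Lr (m n : ℕ) : Matrix (Fin m ⊕ Fin n) (Fin m ⊕ Fin n) ℝ :=
  (graphJoin (⊤ : SimpleGraph (Fin m)) (pathGraph n)).lapMatrix ℝ

lemma Lr_rowsum (v : Fin m ⊕ Fin n) : ∑ w, Lr m n v w = 0 := by
  have h := congrFun ((graphJoin (⊤ : SimpleGraph (Fin m)) (pathGraph n)).lapMatrix_mulVec_const_eq_zero (R := ℝ)) v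
  simpa [Lr, mulVec, dotProduct] using h

lemma Lr_symm (v w : Fin m ⊕ Fin n) : Lr m n v w = Lr m n w v := by
  have h := (graphJoin (⊤ : SimpleGraph (Fin m)) (pathGraph n)).isSymm_lapMatrix (R := ℝ)
  exact (congrFun (congrFun h v) w).symm

lemma Lr_colsum (v : Fin m ⊕ Fin n) : ∑ w, Lr m n w v = 0 := by
  rw [Finset.sum_congr rfl (fun w _ => Lr_symm m n w v), Lr_rowsum]

lemma graphJoin_adj_inl_inl {α β : Type*} (G : SimpleGraph α) (H : SimpleGraph β) (a b : α) :
    (graphJoin G H).Adj (Sum.inl a) (Sum.inl b) ↔ G.Adj a b := Iff.rfl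

lemma graphJoin_adj_inr_inr {α β : Type*} (G : SimpleGraph α) (H : SimpleGraph β) (a b : β) :
    (graphJoin G H).Adj (Sum.inr a) (Sum.inr b) ↔ H.Adj a b := Iff.rfl

lemma graphJoin_adj_inl_inr {α β : Type*} (G : SimpleGraph α) (H : SimpleGraph β) (a : α) (b : β) :
    (graphJoin G H).Adj (Sum.inl a) (Sum.inr b) := trivial

lemma graphJoin_adj_inr_inl {α β : Type*} (G : SimpleGraph α) (H : SimpleGraph β) (a : β) (b : α) :
    (graphJoin G H).Adj (Sum.inr a) (Sum.inl b) := trivial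

lemma Lr_apply (v w : Fin m ⊕ Fin n) :
    Lr m n v w = (if v = w then ((graphJoin (⊤ : SimpleGraph (Fin m)) (pathGraph n)).degree v : ℝ) else 0)
      - (if (graphJoin (⊤ : SimpleGraph (Fin m)) (pathGraph n)).Adj v w then 1 else 0) := by
  simp [Lr, SimpleGraph.lapMatrix, SimpleGraph.degMatrix, SimpleGraph.adjMatrix,
    Matrix.diagonal, Matrix.sub_apply, Matrix.of_apply]

lemma pathdeg (hn : 4 ≤ n) (i : Fin n) :
    ∑ j : Fin n, (if (pathGraph n).Adj i j then (1:ℝ) else 0)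
      = if (i:ℕ) = 0 ∨ (i:ℕ) = n-1 then 1 else 2 := by
  have hsplit : ∀ j : Fin n, (if (pathGraph n).Adj i j then (1:ℝ) else 0)
      = (if (i:ℕ)+1 = (j:ℕ) then 1 else 0) + (if (j:ℕ)+1 = (i:ℕ) then 1 else 0) := by
    intro j
    rw [if_congr (pathGraph_adj) rfl rfl]
    by_cases h1 : (i:ℕ)+1 = (j:ℕ) <;> by_cases h2 : (j:ℕ)+1 = (i:ℕ)
    · omega
    · rw [if_pos (Or.inl h1), if_pos h1, if_neg h2]; ring
    · rw [if_pos (Or.inr h2), if_neg h1, if_pos h2]; ring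
    · rw [if_neg (by tauto), if_neg h1, if_neg h2]; ring
  rw [Finset.sum_congr rfl (fun j _ => hsplit j), Finset.sum_add_distrib]
  have hS1 : ∑ j : Fin n, (if (i:ℕ)+1 = (j:ℕ) then (1:ℝ) else 0)
      = if (i:ℕ)+1 < n then 1 else 0 := by
    by_cases h : (i:ℕ)+1 < n
    · rw [if_pos h, Finset.sum_eq_single (⟨(i:ℕ)+1, h⟩ : Fin n)]
      · rw [if_pos rfl]
      · intro j _ hj
        exact if_neg (fun hc => hj (Fin.ext hc.symm))
      · intro habs; exact absurd (Finset.mem_univ _) habs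
    · rw [if_neg h]
      apply Finset.sum_eq_zero
      intro j _
      exact if_neg (by have := j.isLt; omega)
  have hS2 : ∑ j : Fin n, (if (j:ℕ)+1 = (i:ℕ) then (1:ℝ) else 0)
      = if 1 ≤ (i:ℕ) then 1 else 0 := by
    by_cases h : 1 ≤ (i:ℕ)
    · rw [if_pos h, Finset.sum_eq_single (⟨(i:ℕ)-1, by have := i.isLt; omega⟩ : Fin n)]
      · rw [if_pos (by simp; omega)]
      · intro j _ hj
        exact if_neg (fun hc => hj (Fin.ext (by simp; omega)))
      · intro habs; exact absurd (Finset.mem_univ _) habs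
    · rw [if_neg h]
      apply Finset.sum_eq_zero
      intro j _
      exact if_neg (by omega)
  rw [hS1, hS2]
  have hi := i.isLt
  split_ifs <;> first | (exfalso; omega) | norm_num

lemma deg_inl (a : Fin m) :
    (((graphJoin (⊤ : SimpleGraph (Fin m)) (pathGraph n)).degree (Sum.inl a) : ℕ) : ℝ)
      = (m:ℝ) - 1 + n := by
  rw [SimpleGraph.degree_eq_sum_if_adj]
  rw [Fintype.sum_sum_type]
  have h1 : ∀ b : Fin m, (if (graphJoin (⊤ : SimpleGraph (Fin m)) (pathGraph n)).Adj (Sum.inl a) (Sum.inl b) then (1:ℝ) else 0)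
      = 1 - (if b = a then 1 else 0) := by
    intro b
    rw [if_congr (graphJoin_adj_inl_inl _ _ a b) rfl rfl]
    by_cases h : b = a
    · simp [h]
    · simp [h, Ne.symm h]
  have h2 : ∀ j : Fin n, (if (graphJoin (⊤ : SimpleGraph (Fin m)) (pathGraph n)).Adj (Sum.inl a) (Sum.inr j) then (1:ℝ) else 0) = 1 := by
    intro j
    rw [if_pos (graphJoin_adj_inl_inr _ _ a j)]
  rw [Finset.sum_congr rfl (fun b _ => h1 b), Finset.sum_congr rfl (fun j _ => h2 j)]
  rw [Finset.sum_sub_distrib, Finset.sum_ite_eq' Finset.univ a (fun _ => (1:ℝ))]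
  simp

lemma deg_inr (hn : 4 ≤ n) (i : Fin n) :
    (((graphJoin (⊤ : SimpleGraph (Fin m)) (pathGraph n)).degree (Sum.inr i) : ℕ) : ℝ)
      = (m:ℝ) + (if (i:ℕ) = 0 ∨ (i:ℕ) = n-1 then 1 else 2) := by
  rw [SimpleGraph.degree_eq_sum_if_adj]
  rw [Fintype.sum_sum_type]
  have h1 : ∀ b : Fin m, (if (graphJoin (⊤ : SimpleGraph (Fin m)) (pathGraph n)).Adj (Sum.inr i) (Sum.inl b) then (1:ℝ) else 0) = 1 := by
    intro b
    rw [if_pos (graphJoin_adj_inr_inl _ _ i b)]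
  have h2 : ∀ j : Fin n, (if (graphJoin (⊤ : SimpleGraph (Fin m)) (pathGraph n)).Adj (Sum.inr i) (Sum.inr j) then (1:ℝ) else 0)
      = (if (pathGraph n).Adj i j then (1:ℝ) else 0) := by
    intro j
    rw [if_congr (graphJoin_adj_inr_inr _ _ i j) rfl rfl]
  rw [Finset.sum_congr rfl (fun b _ => h1 b), Finset.sum_congr rfl (fun j _ => h2 j)]
  rw [pathdeg n hn i]
  simp

lemma Lr_add_ones (hm : 1 ≤ m) (hn : 4 ≤ n) :
    Lr m n + Matrix.of (fun _ _ => (1:ℝ)) =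
      fromBlocks (((m:ℝ)+n) • 1) 0 0 (Dmat (m:ℝ) n + Matrix.of fun _ _ => 1) := by
  ext (a | i) (b | j)
  · rw [Matrix.add_apply, Lr_apply, fromBlocks_apply₁₁]
    by_cases hab : a = b
    · subst hab
      rw [if_pos rfl, deg_inl, if_neg (by simp [graphJoin_adj_inl_inl])]
      simp [Matrix.smul_apply, Matrix.one_apply]
      ring
    · rw [if_neg (by simp [hab]), if_pos (by rw [graphJoin_adj_inl_inl]; simpa using hab)]
      simp [Matrix.smul_apply, Matrix.one_apply, hab]
  · rw [Matrix.add_apply, Lr_apply, fromBlocks_apply₁₂]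
    rw [if_neg (by simp), if_pos (graphJoin_adj_inl_inr _ _ a j)]
    simp
  · rw [Matrix.add_apply, Lr_apply, fromBlocks_apply₂₁]
    rw [if_neg (by simp), if_pos (graphJoin_adj_inr_inl _ _ i b)]
    simp
  · rw [Matrix.add_apply, Lr_apply, fromBlocks_apply₂₂, Matrix.add_apply]
    congr 1
    by_cases hij : i = j
    · subst hij
      rw [if_pos rfl, deg_inr m n hn i,
        if_neg (show ¬ (graphJoin (⊤ : SimpleGraph (Fin m)) (pathGraph n)).Adj (Sum.inr i) (Sum.inr i)
          from (graphJoin (⊤ : SimpleGraph (Fin m)) (pathGraph n)).irrefl),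
        Dmat, Matrix.of_apply, if_pos rfl]
      by_cases hc : (i:ℕ) = 0 ∨ (i:ℕ) = n-1
      · rw [if_pos hc, if_pos hc]; ring
      · rw [if_neg hc, if_neg hc]; ring
    · rw [if_neg (by simp [hij]), Dmat, Matrix.of_apply,
        if_neg (fun hc => hij (Fin.ext hc))]
      rw [if_congr (graphJoin_adj_inr_inr _ _ i j) rfl rfl, if_congr (pathGraph_adj) rfl rfl]
      by_cases hadj : (i:ℕ)+1 = (j:ℕ) ∨ (j:ℕ)+1 = (i:ℕ)
      · rw [if_pos hadj, if_pos hadj]; ring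
      · rw [if_neg hadj, if_neg hadj]; ring

end Graph

/-- Theorem 2.3(1): the number of spanning trees of `K_m ∨ P_n` (computed, via the
Matrix-Tree theorem, as the determinant of the Laplacian with one row and the
corresponding column deleted) equals
`(m+n)^{m−1}/(2ⁿ√(m²+4m)) · ((m+2+√(m²+4m))ⁿ − (m+2−√(m²+4m))ⁿ)`. -/
theorem spanningTreeCount_join_complete_path (m n : ℕ) (hm : 1 ≤ m) (hn : 4 ≤ n)
    (u : Fin m ⊕ Fin n) :
    ((((graphJoin (⊤ : SimpleGraph (Fin m)) (pathGraph n)).lapMatrix ℤ).submatrix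
        (fun i : {v : Fin m ⊕ Fin n // v ≠ u} => (i : Fin m ⊕ Fin n))
        (fun j : {v : Fin m ⊕ Fin n // v ≠ u} => (j : Fin m ⊕ Fin n))).det : ℝ) =
      ((m : ℝ) + n) ^ (m - 1) / (2 ^ n * Real.sqrt ((m : ℝ) ^ 2 + 4 * m)) *
        (((m : ℝ) + 2 + Real.sqrt ((m : ℝ) ^ 2 + 4 * m)) ^ n -
          ((m : ℝ) + 2 - Real.sqrt ((m : ℝ) ^ 2 + 4 * m)) ^ n) := by
  classical
  set W := {v : (Fin m ⊕ Fin n) // v ≠ u} with hW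
  set d : Matrix W W ℝ := (Lr m n).submatrix
    (fun i : W => (i : (Fin m ⊕ Fin n))) (fun j : W => (j : (Fin m ⊕ Fin n))) with hd
  set Jn : Matrix (Fin n) (Fin n) ℝ := Matrix.of fun _ _ => 1 with hJn
  set c : ℝ := (m : ℝ) + n with hc
  have hm0 : (0:ℝ) < (m:ℝ) := by exact_mod_cast hm
  have hc0 : c ≠ 0 := by positivity
  -- Step 1: cast the integer determinant to the real one
  have hmap : (((graphJoin (⊤ : SimpleGraph (Fin m)) (pathGraph n))).lapMatrix ℤ).map (Int.cast : ℤ → ℝ) = Lr m n := by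
    ext v w
    simp [Lr, SimpleGraph.lapMatrix, SimpleGraph.degMatrix, SimpleGraph.adjMatrix,
      Matrix.diagonal, Matrix.sub_apply, Matrix.map_apply]
  have hcast : (((((graphJoin (⊤ : SimpleGraph (Fin m)) (pathGraph n)).lapMatrix ℤ).submatrix
      (fun i : W => (i : (Fin m ⊕ Fin n))) (fun j : W => (j : (Fin m ⊕ Fin n)))).det : ℤ) : ℝ) = d.det := by
    have h1 := RingHom.map_det (Int.castRingHom ℝ) (((graphJoin (⊤ : SimpleGraph (Fin m)) (pathGraph n)).lapMatrix ℤ).submatrix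
      (fun i : W => (i : (Fin m ⊕ Fin n))) (fun j : W => (j : (Fin m ⊕ Fin n))))
    rw [RingHom.mapMatrix_apply] at h1
    rw [show ((Int.castRingHom ℝ) : ℤ → ℝ) = (Int.cast : ℤ → ℝ) from rfl] at h1
    rw [h1, ← Matrix.submatrix_map, hmap, hd]
  -- Step 2: cardinality of W
  have hcW : Fintype.card W = m + n - 1 := by
    have h1 : Fintype.card W = Fintype.card (Fin m ⊕ Fin n) - 1 := by
      simp [hW, Fintype.card_subtype_compl]
    rw [h1]
    simp
  have hNcast : 1 + (Fintype.card W : ℝ) = c := by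
    rw [hcW, hc]
    have : 1 ≤ m + n := by omega
    push_cast [Nat.cast_sub this]
    ring
  -- Step 3: cofactor identity
  set e : Unit ⊕ W ≃ (Fin m ⊕ Fin n) :=
    { toFun := fun x => Sum.elim (fun _ => u) (fun k : W => (k : (Fin m ⊕ Fin n))) x
      invFun := fun v => if h : v = u then Sum.inl () else Sum.inr ⟨v, h⟩
      left_inv := by
        rintro (⟨⟩ | k)
        · simp
        · simp [k.2]
      right_inv := by
        intro v
        by_cases h : v = u
        · subst h; simp
        · simp [h] } with he
  have he1 : e (Sum.inl ()) = u := rfl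
  have he2 : ∀ k : W, e (Sum.inr k) = (k : (Fin m ⊕ Fin n)) := fun k => rfl
  set aM : Matrix Unit Unit ℝ := Matrix.of fun _ _ => Lr m n u u with haM
  set bM : Matrix Unit W ℝ := Matrix.of fun _ k => Lr m n u (k : (Fin m ⊕ Fin n)) with hbM
  set cM : Matrix W Unit ℝ := Matrix.of fun k _ => Lr m n (k : (Fin m ⊕ Fin n)) u with hcM
  have hres : (Lr m n + Matrix.of fun _ _ => (1:ℝ)).submatrix e e
      = fromBlocks aM bM cM d + fromBlocks (Matrix.of fun _ _ => 1) (Matrix.of fun _ _ => 1)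
        (Matrix.of fun _ _ => 1) (Matrix.of fun _ _ => 1) := by
    ext (i | i) (j | j)
    · rw [submatrix_apply]
      simp [he, haM]
    · rw [submatrix_apply]
      simp [he, hbM]
    · rw [submatrix_apply]
      simp [he, hcM]
    · rw [submatrix_apply]
      simp [he, hd]
  -- sums over the subtype
  have hsub : ∀ f : (Fin m ⊕ Fin n) → ℝ, (∑ k : W, f (k : (Fin m ⊕ Fin n))) = ∑ w ∈ Finset.univ.erase u, f w := by
    intro f
    exact (Finset.sum_subtype (Finset.univ.erase u) (fun x => by simp [Finset.mem_erase]) f).symm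
  have hfull : ∀ f : (Fin m ⊕ Fin n) → ℝ, f u + (∑ k : W, f (k : (Fin m ⊕ Fin n))) = ∑ w : (Fin m ⊕ Fin n), f w := by
    intro f
    rw [hsub f, Finset.add_sum_erase _ f (Finset.mem_univ u)]
  have hc1 : aM () () + ∑ k : W, cM k () = 0 := by
    rw [haM]
    have := hfull (fun w => Lr m n w u)
    simp only [Matrix.of_apply, hcM]
    rw [this, Lr_colsum]
  have hc2 : ∀ j : W, bM () j + ∑ k : W, d k j = 0 := by
    intro j
    have h0 := hfull (fun w => Lr m n w (j : (Fin m ⊕ Fin n)))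
    simp only [hbM, hd, Matrix.of_apply, submatrix_apply]
    rw [h0]
    exact Lr_colsum m n (j : (Fin m ⊕ Fin n))
  have hr2 : ∀ k : W, cM k () + ∑ j : W, d k j = 0 := by
    intro k
    have h0 := hfull (fun w => Lr m n (k : (Fin m ⊕ Fin n)) w)
    simp only [hcM, hd, Matrix.of_apply, submatrix_apply]
    rw [Lr_symm m n (k : (Fin m ⊕ Fin n)) u, ← Lr_symm m n (k : (Fin m ⊕ Fin n)) u, show Lr m n (k:(Fin m ⊕ Fin n)) u = (fun w => Lr m n (k : (Fin m ⊕ Fin n)) w) u from rfl, h0, Lr_rowsum]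
  have hcof : (Lr m n + Matrix.of fun _ _ => (1:ℝ)).det = c^2 * d.det := by
    rw [← det_submatrix_equiv_self e, hres, det_blocks_add_ones aM bM cM d hc1 hc2 hr2, hNcast]
  -- Step 4: block diagonal determinant
  have hblockdet : (Lr m n + Matrix.of fun _ _ => (1:ℝ)).det = c^m * (Dmat (m:ℝ) n + Jn).det := by
    rw [Lr_add_ones m n hm hn, det_fromBlocks_zero₂₁]
    congr 1
    rw [show (((m:ℝ)+n) • (1 : Matrix (Fin m) (Fin m) ℝ)) = (c • (1 : Matrix (Fin m) (Fin m) ℝ)) from rfl]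
    rw [Matrix.det_smul, det_one]
    simp
  -- Step 5: det (Dmat + Jn)
  have hblockD : ∀ i j, Lr m n (Sum.inr i) (Sum.inr j) = Dmat (m:ℝ) n i j := by
    intro i j
    have h0 := congrFun (congrFun (Lr_add_ones m n hm hn) (Sum.inr i)) (Sum.inr j)
    simp only [Matrix.add_apply, Matrix.of_apply, fromBlocks_apply₂₂] at h0
    linarith [h0]
  have hblockC : ∀ (i : Fin n) (a : Fin m), Lr m n (Sum.inr i) (Sum.inl a) = -1 := by
    intro i a
    have h0 := congrFun (congrFun (Lr_add_ones m n hm hn) (Sum.inr i)) (Sum.inl a)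
    simp only [Matrix.add_apply, Matrix.of_apply, fromBlocks_apply₂₁, Matrix.zero_apply] at h0
    linarith [h0]
  have hrowD : ∀ i : Fin n, ∑ j, Dmat (m:ℝ) n i j = m := by
    intro i
    have h0 := Lr_rowsum m n (Sum.inr i)
    rw [Fintype.sum_sum_type] at h0
    rw [Finset.sum_congr rfl (fun a _ => hblockC i a),
      Finset.sum_congr rfl (fun j _ => hblockD i j)] at h0
    simp only [Finset.sum_const, Finset.card_univ, Fintype.card_fin, nsmul_eq_mul] at h0
    linarith [h0]
  have hDsym : ∀ i j, Dmat (m:ℝ) n i j = Dmat (m:ℝ) n j i := by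
    intro i j
    by_cases hij : (i:ℕ) = (j:ℕ)
    · have : i = j := Fin.ext hij
      subst this; rfl
    · simp only [Dmat, Matrix.of_apply]
      rw [if_neg hij, if_neg (fun hh : (j:ℕ) = (i:ℕ) => hij hh.symm)]
      exact if_congr or_comm rfl rfl
  have hcolD : ∀ j : Fin n, ∑ i, Dmat (m:ℝ) n i j = m := by
    intro j
    rw [Finset.sum_congr rfl (fun i _ => hDsym i j), hrowD j]
  have hJJ : Jn * Jn = (n:ℝ) • Jn := by
    ext i j; simp [hJn, mul_apply, Matrix.smul_apply]
  have hDJ1 : Dmat (m:ℝ) n * Jn = (m:ℝ) • Jn := by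
    ext i j
    simp only [mul_apply, hJn, Matrix.of_apply, mul_one, Matrix.smul_apply, smul_eq_mul]
    rw [hrowD i]; try ring
  have hJD : Jn * Dmat (m:ℝ) n = (m:ℝ) • Jn := by
    ext i j
    simp only [mul_apply, hJn, Matrix.of_apply, one_mul, Matrix.smul_apply, smul_eq_mul]
    rw [hcolD j]; try ring
  have hkey : (Dmat (m:ℝ) n + Jn) * (c • (1 : Matrix (Fin n) (Fin n) ℝ) - Jn)
      = c • Dmat (m:ℝ) n := by
    rw [add_mul, mul_sub, mul_sub, Matrix.mul_smul, Matrix.mul_one, Matrix.mul_smul,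
      Matrix.mul_one, hDJ1, hJJ, hc]
    module
  have hdetfac : (c • (1 : Matrix (Fin n) (Fin n) ℝ) - Jn).det = c^n * (1 - (n:ℝ)/c) := by
    have hfac : c • (1 : Matrix (Fin n) (Fin n) ℝ) - Jn
        = c • (1 + (replicateCol Unit (fun _ => -((1:ℝ)/c)) : Matrix (Fin n) Unit ℝ)
          * (replicateRow Unit (fun _ => (1:ℝ)) : Matrix Unit (Fin n) ℝ)) := by
      ext i j
      simp only [Matrix.sub_apply, Matrix.smul_apply, Matrix.add_apply, mul_apply, hJn,
        Matrix.of_apply, smul_eq_mul, Matrix.replicateCol_apply, Matrix.replicateRow_apply,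
        Finset.univ_unique, Finset.sum_singleton]
      by_cases hij : i = j
      · subst hij
        rw [Matrix.one_apply_eq]
        field_simp
        try ring
      · rw [Matrix.one_apply_ne hij]
        field_simp
        try ring
    rw [hfac, Matrix.det_smul, det_one_add_replicateCol_mul_replicateRow]
    simp only [dotProduct, Fintype.card_fin, Finset.sum_const, Finset.card_univ, nsmul_eq_mul,
      mul_neg, mul_one]
    ring
  have hDJdet : (Dmat (m:ℝ) n + Jn).det = c * Useq ((m:ℝ)+2) n := by
    have h1 : (Dmat (m:ℝ) n + Jn).det * (c^n * (1 - (n:ℝ)/c)) = c^n * (Dmat (m:ℝ) n).det := by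
      rw [← hdetfac, ← det_mul, hkey, Matrix.det_smul, Fintype.card_fin]
    rw [det_Dmat (m:ℝ) n hn] at h1
    have hpow : c^n = c^(n-1) * c := by
      rw [← pow_succ]; congr 1; omega
    have hcm : c * (1 - (n:ℝ)/c) = (m:ℝ) := by
      rw [mul_sub, mul_one, mul_div_cancel₀ _ hc0, hc]; ring
    have hval : c^n * (1 - (n:ℝ)/c) = c^(n-1) * (m:ℝ) := by
      rw [hpow, mul_assoc, hcm]
    rw [hval, hpow] at h1
    have h5 : c^(n-1) * ((Dmat (m:ℝ) n + Jn).det * (m:ℝ))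
        = c^(n-1) * ((c * Useq ((m:ℝ)+2) n) * (m:ℝ)) := by
      linear_combination h1
    have h6 := mul_left_cancel₀ (pow_ne_zero (n-1) hc0) h5
    exact mul_right_cancel₀ (ne_of_gt hm0) h6
  -- Step 6: assemble
  have hdsub : d.det = c^(m-1) * Useq ((m:ℝ)+2) n := by
    have h1 : c^2 * d.det = c^m * (c * Useq ((m:ℝ)+2) n) := by
      rw [← hDJdet, ← hblockdet, hcof]
    have h2 : c^m * c = c^(m-1) * c^2 := by
      rw [← pow_succ, ← pow_add]
      congr 1
      omega
    have h3 : c^2 * d.det = c^(m-1) * c^2 * Useq ((m:ℝ)+2) n := by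
      rw [h1, ← mul_assoc, h2]
    have hp2 : (c:ℝ)^2 ≠ 0 := pow_ne_zero _ hc0
    have := mul_left_cancel₀ hp2 (by linarith [h3] : c^2 * d.det = c^2 * (c^(m-1) * Useq ((m:ℝ)+2) n))
    exact this
  rw [hcast, hdsub]
  -- final real arithmetic
  have hsq : Real.sqrt ((m:ℝ)^2 + 4*m) ≠ 0 := by
    have : (0:ℝ) < (m:ℝ)^2 + 4*m := by nlinarith
    exact ne_of_gt (Real.sqrt_pos.mpr this)
  have hclosed := Useq_closed (m:ℝ) (by exact_mod_cast hm) n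
  rw [← hclosed]
  have h2n : (2:ℝ)^n ≠ 0 := by positivity
  field_simp
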